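/- Let n be a natural number and let A ⊆ B be finite graphs. Then A ≤ₙ B if and only if there is an enumeration b₁, …, b_m of B ∖ A such that, for every i ≤ m, the vertex b_i has at most n neighbours in A ∪ {b₁, …, b_{i−1}}. -/

import Mathlib

/-- `v` has at most `n` neighbours (in the graph `G`) lying in the set `X`. -/
def valencyLE {V : Type*} (G : SimpleGraph V) (v : V) (X : Set V) (n : ℕ) : Prop :=
  {x ∈ X | G.Adj v x}.encard ≤ n

/-- `B` is `n`-open over `A`. -/
def nOpenOver {V : Type*} (G : SimpleGraph V) (n : ℕ) (A B : Set V) : Prop :=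
  ∀ C : Set V, C ⊆ B \ A → C.Finite → C.Nonempty →
    ∃ c ∈ C, valencyLE G c (A ∪ C) n

lemma valencyLE_mono {V : Type*} {G : SimpleGraph V} {v : V} {X Y : Set V} {n : ℕ}
    (hXY : X ⊆ Y) (h : valencyLE G v Y n) : valencyLE G v X n := by
  refine le_trans (Set.encard_mono ?_) h
  rintro x ⟨hx, ha⟩
  exact ⟨hXY hx, ha⟩

lemma range_snoc' {V : Type*} {m : ℕ} (b : Fin m → V) (c : V) :
    Set.range (Fin.snoc b c : Fin (m + 1) → V) = insert c (Set.range b) := by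
  ext x
  constructor
  · rintro ⟨i, rfl⟩
    induction i using Fin.lastCases with
    | last => rw [Fin.snoc_last]; exact Or.inl rfl
    | cast i => rw [Fin.snoc_castSucc]; exact Or.inr ⟨i, rfl⟩
  · rintro (rfl | ⟨i, rfl⟩)
    · exact ⟨Fin.last m, Fin.snoc_last _ _⟩
    · exact ⟨i.castSucc, Fin.snoc_castSucc _ _ _⟩

lemma fwd {V : Type*} (G : SimpleGraph V) (n : ℕ) (A : Set V) :
    ∀ k (S : Set V), S.Finite → S.ncard = k →
      (∀ C : Set V, C ⊆ S → C.Finite → C.Nonempty → ∃ c ∈ C, valencyLE G c (A ∪ C) n) →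
      ∃ (m : ℕ) (b : Fin m → V), Function.Injective b ∧ Set.range b = S ∧
        ∀ i : Fin m, valencyLE G (b i) (A ∪ (b '' {j : Fin m | j < i})) n := by
  intro k
  induction k using Nat.strong_induction_on with
  | _ k ih =>
    intro S hSfin hcard hyp
    rcases S.eq_empty_or_nonempty with rfl | hne
    · exact ⟨0, Fin.elim0, fun i => i.elim0, by simp, fun i => i.elim0⟩
    · obtain ⟨c, hcS, hcval⟩ := hyp S subset_rfl hSfin hne
      have hk : 0 < k := by
        rw [← hcard]
        exact (Set.ncard_pos hSfin).mpr hne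
      have hS' : (S \ {c}).ncard = k - 1 := by
        rw [Set.ncard_diff_singleton_of_mem hcS, hcard]
      obtain ⟨m, b, hinj, hrange, hval⟩ :=
        ih (k - 1) (Nat.sub_lt hk one_pos) (S \ {c}) hSfin.diff hS'
          (fun C hC => hyp C (hC.trans Set.diff_subset))
      have hcnot : c ∉ Set.range b := by
        rw [hrange]; exact fun h => h.2 rfl
      refine ⟨m + 1, Fin.snoc b c, ?_, ?_, ?_⟩
      · intro i j hij
        induction i using Fin.lastCases with
        | last =>
          induction j using Fin.lastCases with
          | last => rfl
          | cast j =>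
            simp only [Fin.snoc_last, Fin.snoc_castSucc] at hij
            exact absurd ⟨j, hij.symm⟩ hcnot
        | cast i =>
          induction j using Fin.lastCases with
          | last =>
            simp only [Fin.snoc_last, Fin.snoc_castSucc] at hij
            exact absurd ⟨i, hij⟩ hcnot
          | cast j =>
            simp only [Fin.snoc_castSucc] at hij
            exact congrArg Fin.castSucc (hinj hij)
      · rw [range_snoc' b c, hrange, Set.insert_diff_singleton, Set.insert_eq_of_mem hcS]
      · intro i
        induction i using Fin.lastCases with
        | last =>
          rw [Fin.snoc_last]
          refine valencyLE_mono ?_ hcval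
          apply Set.union_subset_union_right
          rintro x ⟨j, -, rfl⟩
          induction j using Fin.lastCases with
          | last => rw [Fin.snoc_last]; exact hcS
          | cast j =>
            rw [Fin.snoc_castSucc]
            have : b j ∈ S \ {c} := by rw [← hrange]; exact ⟨j, rfl⟩
            exact this.1
        | cast i =>
          rw [Fin.snoc_castSucc]
          refine valencyLE_mono ?_ (hval i)
          apply Set.union_subset_union_right
          rintro x ⟨j, hj, rfl⟩
          induction j using Fin.lastCases with
          | last =>
            exact absurd hj (by simp [Fin.lt_def])
          | cast j =>
            rw [Fin.snoc_castSucc]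
            exact ⟨j, Fin.castSucc_lt_castSucc_iff.mp hj, rfl⟩

theorem stmt4 {V : Type*} (G : SimpleGraph V) (n : ℕ) (A B : Set V)
    (hAB : A ⊆ B) (hBfin : B.Finite) :
    nOpenOver G n A B ↔
      ∃ (m : ℕ) (b : Fin m → V), Function.Injective b ∧
        Set.range b = B \ A ∧
        ∀ i : Fin m,
          valencyLE G (b i) (A ∪ (b '' {j : Fin m | j < i})) n := by
  constructor
  · intro h
    exact fwd G n A (B \ A).ncard (B \ A) hBfin.diff rfl h
  · rintro ⟨m, b, hinj, hrange, hval⟩ C hC hCfin hCne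
    classical
    have hCr : C ⊆ Set.range b := hrange ▸ hC
    have hTne : (Finset.univ.filter (fun j : Fin m => b j ∈ C)).Nonempty := by
      obtain ⟨x, hx⟩ := hCne
      obtain ⟨j, rfl⟩ := hCr hx
      exact ⟨j, by simp [hx]⟩
    set i := (Finset.univ.filter (fun j : Fin m => b j ∈ C)).max' hTne with hi
    have hiC : b i ∈ C := by
      have := Finset.max'_mem _ hTne
      simpa using this
    refine ⟨b i, hiC, ?_⟩
    refine le_trans (Set.encard_mono ?_) (hval i)
    rintro x ⟨hx, hadj⟩
    refine ⟨?_, hadj⟩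
    rcases hx with hx | hx
    · exact Or.inl hx
    · obtain ⟨j, rfl⟩ := hCr hx
      have hji : j ≤ i := Finset.le_max' _ j (by simp [hx])
      have hne : j ≠ i := by
        rintro rfl
        exact G.irrefl hadj
      exact Or.inr ⟨j, lt_of_le_of_ne hji hne, rfl⟩
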